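/- The derivative with respect to ρ at ρ = 0 of the Copas per-study log-likelihood ℓ(ρ) = -½ log(τ²+σ²) - (y-μ)²/(2(τ²+σ²)) - log Φ(γ0+γ1/s) + log Φ(v(y;ρ)) equals φ(γ0+γ1/s)/Φ(γ0+γ1/s) · s(y-μ)/(τ²+σ²), where φ is the standard normal density. -/

import Mathlib

open MeasureTheory ProbabilityTheory

/-- Standard normal CDF. -/
noncomputable def stdNormCDF (x : ℝ) : ℝ := (gaussianReal 0 1 (Set.Iic x)).toReal

/-- Standard normal density. -/
noncomputable def stdNormPDF (x : ℝ) : ℝ := gaussianPDFReal 0 1 x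

lemma stdNormCDF_eq (x : ℝ) : stdNormCDF x = ∫ t in Set.Iic x, gaussianPDFReal 0 1 t := by
  rw [stdNormCDF, gaussianReal_apply_eq_integral 0 one_ne_zero,
    ENNReal.toReal_ofReal (integral_nonneg fun t => gaussianPDFReal_nonneg 0 1 t)]

lemma continuous_pdf : Continuous (gaussianPDFReal 0 1) := by
  unfold gaussianPDFReal
  fun_prop

lemma hasDerivAt_stdNormCDF (x : ℝ) : HasDerivAt stdNormCDF (stdNormPDF x) x := by
  have hint : Integrable (gaussianPDFReal 0 1) := integrable_gaussianPDFReal 0 1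
  have key : ∀ z : ℝ, stdNormCDF z = stdNormCDF 0 + ∫ t in (0:ℝ)..z, gaussianPDFReal 0 1 t := by
    intro z
    rw [stdNormCDF_eq, stdNormCDF_eq,
      ← intervalIntegral.integral_Iic_sub_Iic hint.integrableOn hint.integrableOn]
    ring
  have h : HasDerivAt (fun z => stdNormCDF 0 + ∫ t in (0:ℝ)..z, gaussianPDFReal 0 1 t)
      (gaussianPDFReal 0 1 x) x := by
    have h2 : HasDerivAt (fun z => ∫ t in (0:ℝ)..z, gaussianPDFReal 0 1 t)
        (gaussianPDFReal 0 1 x) x :=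
      intervalIntegral.integral_hasDerivAt_right (hint.intervalIntegrable (a := 0) (b := x))
        (continuous_pdf.stronglyMeasurable.stronglyMeasurableAtFilter)
        continuous_pdf.continuousAt
    simpa [Pi.add_def] using (hasDerivAt_const x (stdNormCDF 0)).add h2
  exact h.congr_of_eventuallyEq (Filter.Eventually.of_forall key)


/-- The derivative at `ρ = 0` of the Copas per-study log-likelihood
`ℓ(ρ) = -½ log(τ²+σ²) - (y-μ)²/(2(τ²+σ²)) - log Φ(γ₀+γ₁/s) + log Φ(v(y;ρ))`
equals `φ(γ₀+γ₁/s)/Φ(γ₀+γ₁/s) · s (y-μ)/(τ²+σ²)`: the per-study score. -/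
theorem copas_score_at_null
    (γ0 γ1 s τ σ μ y : ℝ) (hs : 0 < s) (hvar : 0 < τ ^ 2 + σ ^ 2)
    (hΦ : 0 < stdNormCDF (γ0 + γ1 / s))
    (v : ℝ → ℝ → ℝ)
    (hv : v = fun y ρ => (γ0 + γ1 / s + ρ * s * (y - μ) / (τ ^ 2 + σ ^ 2)) /
      Real.sqrt (1 - ρ ^ 2 * s ^ 2 / (τ ^ 2 + σ ^ 2)))
    (ℓ : ℝ → ℝ)
    (hℓ : ℓ = fun ρ => -(1 / 2) * Real.log (τ ^ 2 + σ ^ 2)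
      - (y - μ) ^ 2 / (2 * (τ ^ 2 + σ ^ 2))
      - Real.log (stdNormCDF (γ0 + γ1 / s)) + Real.log (stdNormCDF (v y ρ))) :
    HasDerivAt ℓ
      (stdNormPDF (γ0 + γ1 / s) / stdNormCDF (γ0 + γ1 / s)
        * (s * (y - μ) / (τ ^ 2 + σ ^ 2))) 0 := by
  subst hv hℓ
  set a := γ0 + γ1 / s with ha
  set c := s * (y - μ) / (τ ^ 2 + σ ^ 2) with hc
  have hN : HasDerivAt (fun ρ : ℝ => a + ρ * s * (y - μ) / (τ ^ 2 + σ ^ 2)) c 0 := by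
    have h1 : HasDerivAt (fun ρ : ℝ => a + c * ρ) c 0 := by
      simpa using ((hasDerivAt_id (0:ℝ)).const_mul c).const_add a
    refine h1.congr_of_eventuallyEq (Filter.Eventually.of_forall fun ρ => ?_)
    rw [hc]; ring
  have hu : HasDerivAt (fun ρ : ℝ => 1 - ρ ^ 2 * s ^ 2 / (τ ^ 2 + σ ^ 2)) 0 0 := by
    have h1 : HasDerivAt (fun ρ : ℝ => 1 - ρ ^ 2 * (s ^ 2 / (τ ^ 2 + σ ^ 2))) 0 0 := by
      simpa using ((hasDerivAt_pow 2 (0:ℝ)).mul_const (s ^ 2 / (τ ^ 2 + σ ^ 2))).const_sub 1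
    refine h1.congr_of_eventuallyEq (Filter.Eventually.of_forall fun ρ => ?_)
    ring
  have hD : HasDerivAt (fun ρ : ℝ => Real.sqrt (1 - ρ ^ 2 * s ^ 2 / (τ ^ 2 + σ ^ 2))) 0 0 := by
    simpa using hu.sqrt (by norm_num)
  have hDval : Real.sqrt (1 - (0:ℝ) ^ 2 * s ^ 2 / (τ ^ 2 + σ ^ 2)) = 1 := by norm_num
  have hvd : HasDerivAt (fun ρ : ℝ => (a + ρ * s * (y - μ) / (τ ^ 2 + σ ^ 2)) /
      Real.sqrt (1 - ρ ^ 2 * s ^ 2 / (τ ^ 2 + σ ^ 2))) c 0 := by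
    have := hN.div hD (by rw [hDval]; norm_num)
    simpa [hDval, Pi.div_def] using this
  have hv0 : (a + (0:ℝ) * s * (y - μ) / (τ ^ 2 + σ ^ 2)) /
      Real.sqrt (1 - (0:ℝ) ^ 2 * s ^ 2 / (τ ^ 2 + σ ^ 2)) = a := by
    rw [hDval]; simp
  have hΦv : HasDerivAt (fun ρ : ℝ => stdNormCDF ((a + ρ * s * (y - μ) / (τ ^ 2 + σ ^ 2)) /
      Real.sqrt (1 - ρ ^ 2 * s ^ 2 / (τ ^ 2 + σ ^ 2)))) (stdNormPDF a * c) 0 := by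
    have := (hasDerivAt_stdNormCDF ((a + (0:ℝ) * s * (y - μ) / (τ ^ 2 + σ ^ 2)) /
      Real.sqrt (1 - (0:ℝ) ^ 2 * s ^ 2 / (τ ^ 2 + σ ^ 2)))).comp 0 hvd
    rw [hv0] at this
    simpa [Function.comp_def] using this
  have hΦ0 : stdNormCDF ((a + (0:ℝ) * s * (y - μ) / (τ ^ 2 + σ ^ 2)) /
      Real.sqrt (1 - (0:ℝ) ^ 2 * s ^ 2 / (τ ^ 2 + σ ^ 2))) ≠ 0 := by
    rw [hv0]; exact hΦ.ne'
  have hlog := hΦv.log hΦ0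
  rw [hv0] at hlog
  have hderiv : stdNormPDF a / stdNormCDF a * c = 0 + stdNormPDF a * c / stdNormCDF a := by
    ring
  rw [hderiv]
  exact (hasDerivAt_const (0:ℝ) (-(1 / 2) * Real.log (τ ^ 2 + σ ^ 2)
      - (y - μ) ^ 2 / (2 * (τ ^ 2 + σ ^ 2)) - Real.log (stdNormCDF a))).add hlog
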